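/- Let n and x be natural numbers with x ≤ n. Then for every real number a, (1 − a) I_n(1 − a, n − x) = (n−x+1)!(x+1)!/(n+3)! − ((n−x+1)! x!/(n+2)!) a + Σ_{k=x+2}^{n+3} C(n−x+1, k−x−2) (−1)^{k−x−2} a^k / ((k−1)k). -/

import Mathlib

/-- `I_n(a, x) = a^{x+2} ∫₀¹ t^{x+1} (1 − t) (1 − a t)^{n−x} dt`. -/
noncomputable def In (n x : ℕ) (a : ℝ) : ℝ :=
  a ^ (x + 2) * ∫ t in (0 : ℝ)..1, t ^ (x + 1) * (1 - t) * (1 - a * t) ^ (n - x)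

open Finset intervalIntegral


open Finset

theorem Tsum (N p : ℕ) :
    ∑ j ∈ range (N + 1), (N.choose j : ℝ) * (-1) ^ j / (p + j + 1) =
      (N.factorial : ℝ) * p.factorial / (N + p + 1).factorial := by
  induction N generalizing p with
  | zero =>
    simp [Nat.factorial_succ]
    rw [eq_div_iff (by positivity)]
    push_cast
    field_simp
  | succ N ih =>
    have key : ∑ j ∈ range (N + 2), ((N+1).choose j : ℝ) * (-1) ^ j / (p + j + 1)
        = (∑ j ∈ range (N + 1), (N.choose j : ℝ) * (-1) ^ j / (p + j + 1))
          - ∑ j ∈ range (N + 1), (N.choose j : ℝ) * (-1) ^ j / ((((p+1) : ℕ) : ℝ) + j + 1) := by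
      rw [Finset.sum_range_succ' _ (N+1)]
      have step1 : ∑ k ∈ range (N + 1), ((N+1).choose (k+1) : ℝ) * (-1) ^ (k+1) / ((p : ℝ) + (↑(k+1) : ℝ) + 1)
          = ∑ k ∈ range (N + 1), ((-((N.choose k : ℝ) * (-1) ^ k / ((((p+1) : ℕ) : ℝ) + k + 1)))
              + (N.choose (k+1) : ℝ) * (-1) ^ (k+1) / ((p:ℝ) + (↑(k+1):ℝ) + 1)) := by
        apply Finset.sum_congr rfl
        intro k _
        rw [Nat.choose_succ_succ]
        push_cast
        ring
      rw [step1, Finset.sum_add_distrib, Finset.sum_neg_distrib]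
      have hshift : ∑ k ∈ range (N + 1), ((N.choose (k+1)) : ℝ) * (-1) ^ (k+1) / ((p:ℝ) + (↑(k+1):ℝ) + 1)
          = (∑ j ∈ range (N + 1), (N.choose j : ℝ) * (-1) ^ j / (p + j + 1)) - 1 / ((p:ℝ) + 1) := by
        have h0 := Finset.sum_range_succ' (fun j => (N.choose j : ℝ) * (-1) ^ j / ((p:ℝ) + j + 1)) (N+1)
        rw [Finset.sum_range_succ _ (N+1)] at h0
        simp only [Nat.choose_succ_self, Nat.cast_zero, zero_mul, zero_div, zero_add, add_zero,
          Nat.choose_zero_right, Nat.cast_one, one_mul, pow_zero] at h0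
        rw [h0]
        ring
      rw [hshift]
      simp only [Nat.choose_zero_right, Nat.cast_one, one_mul, pow_zero, Nat.cast_zero, add_zero,
        Nat.cast_ofNat]
      ring
    rw [key, ih, ih]
    have h2 : ((N + (p+1) + 1).factorial : ℝ) = (N + p + 2) * (N + p + 1).factorial := by
      have h : N + (p+1) + 1 = (N + p + 1) + 1 := by ring
      rw [h, Nat.factorial_succ]; push_cast; ring
    have h3 : ((N + 1 + p + 1).factorial : ℝ) = (N + p + 2) * (N + p + 1).factorial := by
      have h : N + 1 + p + 1 = (N + p + 1) + 1 := by ring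
      rw [h, Nat.factorial_succ]; push_cast; ring
    have h4 : ((p+1).factorial : ℝ) = (p + 1) * p.factorial := by
      rw [Nat.factorial_succ]; push_cast; ring
    have h5 : ((N+1).factorial : ℝ) = (N + 1) * N.factorial := by
      rw [Nat.factorial_succ]; push_cast; ring
    rw [h2, h3, h4, h5]
    have hf : ((N + p + 1).factorial : ℝ) ≠ 0 := Nat.cast_ne_zero.2 (Nat.factorial_ne_zero _)
    have hn : ((N : ℝ) + p + 2) ≠ 0 := by positivity
    field_simp
    ring


open Finset intervalIntegral

theorem intExpand (m x : ℕ) (b : ℝ) :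
    ∫ t in (0:ℝ)..1, t ^ (m + 1) * (1 - t) * (1 - b * t) ^ x =
      ∑ j ∈ range (x + 1), (x.choose j : ℝ) * (-1) ^ j * b ^ j * (1 / (m + j + 2) - 1 / (m + j + 3)) := by
  have expand : ∀ t : ℝ, t ^ (m + 1) * (1 - t) * (1 - b * t) ^ x =
      ∑ j ∈ range (x + 1), (x.choose j : ℝ) * (-1) ^ j * b ^ j * (t ^ (m + 1 + j) - t ^ (m + 2 + j)) := by
    intro t
    have h : (1 : ℝ) - b * t = (-(b * t)) + 1 := by ring
    rw [h, add_pow, Finset.mul_sum]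
    apply Finset.sum_congr rfl
    intro j _
    rw [neg_pow, mul_pow]
    ring
  have hbody : (fun t : ℝ => t ^ (m + 1) * (1 - t) * (1 - b * t) ^ x) =
      fun t : ℝ => ∑ j ∈ range (x + 1), (x.choose j : ℝ) * (-1) ^ j * b ^ j * (t ^ (m + 1 + j) - t ^ (m + 2 + j)) :=
    funext expand
  rw [hbody, intervalIntegral.integral_finset_sum]
  · apply Finset.sum_congr rfl
    intro j _
    rw [intervalIntegral.integral_const_mul,
      intervalIntegral.integral_sub (intervalIntegral.intervalIntegrable_pow _) (intervalIntegral.intervalIntegrable_pow _),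
      integral_pow, integral_pow]
    push_cast
    ring
  · intro j _
    apply Continuous.intervalIntegrable
    continuity


open Finset intervalIntegral

noncomputable def Saux (m x : ℕ) (a : ℝ) : ℝ :=
  ∑ j ∈ range (x + 1), (x.choose j : ℝ) * (-1) ^ j * (1 - a) ^ (m + j + 3) *
    (1 / ((m : ℝ) + j + 2) - 1 / ((m : ℝ) + j + 3))

noncomputable def Saux1 (m x : ℕ) (a : ℝ) : ℝ :=
  ∑ j ∈ range (x + 1), (x.choose j : ℝ) * (-1) ^ j *
    (((m : ℝ) + j + 3) * (1 - a) ^ (m + j + 2) * (-1)) *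
    (1 / ((m : ℝ) + j + 2) - 1 / ((m : ℝ) + j + 3))

theorem hS1 (m x : ℕ) (a : ℝ) : HasDerivAt (Saux m x) (Saux1 m x a) a := by
  unfold Saux Saux1
  apply HasDerivAt.fun_sum
  intro j _
  have h := (((hasDerivAt_id a).const_sub 1).fun_pow (m + j + 3)).const_mul ((x.choose j : ℝ) * (-1) ^ j)
  have h2 := h.mul_const (1 / ((m : ℝ) + j + 2) - 1 / ((m : ℝ) + j + 3))
  refine h2.congr_deriv ?_
  simp only [id_eq]
  have e : m + j + 3 - 1 = m + j + 2 := by omega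
  rw [e]
  push_cast
  ring

theorem hS2 (m x : ℕ) (a : ℝ) : HasDerivAt (Saux1 m x) (a ^ x * (1 - a) ^ (m + 1)) a := by
  unfold Saux1
  have h : HasDerivAt (fun a : ℝ => ∑ j ∈ range (x + 1), (x.choose j : ℝ) * (-1) ^ j *
      (((m : ℝ) + j + 3) * (1 - a) ^ (m + j + 2) * (-1)) *
      (1 / ((m : ℝ) + j + 2) - 1 / ((m : ℝ) + j + 3)))
      (∑ j ∈ range (x + 1), (x.choose j : ℝ) * (-1) ^ j *
        (((m : ℝ) + j + 3) * (((m + j + 2 : ℕ) : ℝ) * (1 - a) ^ (m + j + 1) * (-1)) * (-1)) *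
        (1 / ((m : ℝ) + j + 2) - 1 / ((m : ℝ) + j + 3))) a := by
    apply HasDerivAt.fun_sum
    intro j _
    have h0 := ((hasDerivAt_id a).const_sub 1).pow (m + j + 2)
    have e : m + j + 2 - 1 = m + j + 1 := by omega
    rw [e] at h0
    simp only [id_eq] at h0
    exact (((h0.const_mul (((m : ℝ) + j + 3))).mul_const (-1)).const_mul
      ((x.choose j : ℝ) * (-1) ^ j)).mul_const _
  have hval : (∑ j ∈ range (x + 1), (x.choose j : ℝ) * (-1) ^ j *
        (((m : ℝ) + j + 3) * (((m + j + 2 : ℕ) : ℝ) * (1 - a) ^ (m + j + 1) * (-1)) * (-1)) *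
        (1 / ((m : ℝ) + j + 2) - 1 / ((m : ℝ) + j + 3))) = a ^ x * (1 - a) ^ (m + 1) := by
    have step : ∀ j ∈ range (x + 1), (x.choose j : ℝ) * (-1) ^ j *
        (((m : ℝ) + j + 3) * (((m + j + 2 : ℕ) : ℝ) * (1 - a) ^ (m + j + 1) * (-1)) * (-1)) *
        (1 / ((m : ℝ) + j + 2) - 1 / ((m : ℝ) + j + 3)) =
        (-(1 - a)) ^ j * 1 ^ (x - j) * (x.choose j : ℝ) * (1 - a) ^ (m + 1) := by
      intro j _
      have h2 : ((m : ℝ) + j + 2) ≠ 0 := by positivity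
      have h3 : ((m : ℝ) + j + 3) ≠ 0 := by positivity
      rw [neg_pow (1 - a) j, show m + j + 1 = j + (m + 1) by ring, pow_add]
      push_cast
      field_simp
      ring
    rw [Finset.sum_congr rfl step, ← Finset.sum_mul, ← add_pow]
    norm_num
  exact hval ▸ h

noncomputable def Gaux (m x : ℕ) (a : ℝ) : ℝ :=
  ((m + 1).factorial : ℝ) * ((x + 1).factorial : ℝ) / ((m + x + 3).factorial : ℝ)
  - (((m + 1).factorial : ℝ) * (x.factorial : ℝ) / ((m + x + 2).factorial : ℝ)) * a
  + ∑ j ∈ range (m + 2), ((m + 1).choose j : ℝ) * (-1) ^ j * a ^ (x + 2 + j) *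
      (1 / (((x : ℝ) + j + 1) * ((x : ℝ) + j + 2)))

noncomputable def Gaux1 (m x : ℕ) (a : ℝ) : ℝ :=
  -(((m + 1).factorial : ℝ) * (x.factorial : ℝ) / ((m + x + 2).factorial : ℝ))
  + ∑ j ∈ range (m + 2), ((m + 1).choose j : ℝ) * (-1) ^ j * a ^ (x + 1 + j) *
      (1 / ((x : ℝ) + j + 1))

theorem hG1 (m x : ℕ) (a : ℝ) : HasDerivAt (Gaux m x) (Gaux1 m x a) a := by
  unfold Gaux Gaux1
  have hsum : HasDerivAt (fun a : ℝ => ∑ j ∈ range (m + 2), ((m + 1).choose j : ℝ) * (-1) ^ j * a ^ (x + 2 + j) *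
      (1 / (((x : ℝ) + j + 1) * ((x : ℝ) + j + 2))))
      (∑ j ∈ range (m + 2), ((m + 1).choose j : ℝ) * (-1) ^ j * (((x + 2 + j : ℕ) : ℝ) * a ^ (x + 1 + j)) *
      (1 / (((x : ℝ) + j + 1) * ((x : ℝ) + j + 2)))) a := by
    apply HasDerivAt.fun_sum
    intro j _
    have h0 := (hasDerivAt_pow (x + 2 + j) a).const_mul (((m + 1).choose j : ℝ) * (-1) ^ j)
    have e : x + 2 + j - 1 = x + 1 + j := by omega
    rw [e] at h0
    exact h0.mul_const _
  have hlin : HasDerivAt (fun a : ℝ =>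
      ((m + 1).factorial : ℝ) * ((x + 1).factorial : ℝ) / ((m + x + 3).factorial : ℝ)
      - (((m + 1).factorial : ℝ) * (x.factorial : ℝ) / ((m + x + 2).factorial : ℝ)) * a)
      (0 - (((m + 1).factorial : ℝ) * (x.factorial : ℝ) / ((m + x + 2).factorial : ℝ)) * 1) a := by
    exact (hasDerivAt_const a _).sub ((hasDerivAt_id a).const_mul _)
  have h := hlin.add hsum
  have hval : (0 - (((m + 1).factorial : ℝ) * (x.factorial : ℝ) / ((m + x + 2).factorial : ℝ)) * 1)
      + (∑ j ∈ range (m + 2), ((m + 1).choose j : ℝ) * (-1) ^ j * (((x + 2 + j : ℕ) : ℝ) * a ^ (x + 1 + j)) *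
      (1 / (((x : ℝ) + j + 1) * ((x : ℝ) + j + 2)))) =
      -(((m + 1).factorial : ℝ) * (x.factorial : ℝ) / ((m + x + 2).factorial : ℝ))
      + ∑ j ∈ range (m + 2), ((m + 1).choose j : ℝ) * (-1) ^ j * a ^ (x + 1 + j) *
        (1 / ((x : ℝ) + j + 1)) := by
    have step : ∀ j ∈ range (m + 2), ((m + 1).choose j : ℝ) * (-1) ^ j * (((x + 2 + j : ℕ) : ℝ) * a ^ (x + 1 + j)) *
        (1 / (((x : ℝ) + j + 1) * ((x : ℝ) + j + 2))) =
        ((m + 1).choose j : ℝ) * (-1) ^ j * a ^ (x + 1 + j) * (1 / ((x : ℝ) + j + 1)) := by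
      intro j _
      have h1 : ((x : ℝ) + j + 1) ≠ 0 := by positivity
      have h2 : ((x : ℝ) + j + 2) ≠ 0 := by positivity
      push_cast
      field_simp
      ring
    rw [Finset.sum_congr rfl step]
    ring
  exact hval ▸ h

theorem hG2 (m x : ℕ) (a : ℝ) : HasDerivAt (Gaux1 m x) (a ^ x * (1 - a) ^ (m + 1)) a := by
  unfold Gaux1
  have hsum : HasDerivAt (fun a : ℝ => ∑ j ∈ range (m + 2), ((m + 1).choose j : ℝ) * (-1) ^ j * a ^ (x + 1 + j) *
      (1 / ((x : ℝ) + j + 1)))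
      (∑ j ∈ range (m + 2), ((m + 1).choose j : ℝ) * (-1) ^ j * (((x + 1 + j : ℕ) : ℝ) * a ^ (x + j)) *
      (1 / ((x : ℝ) + j + 1))) a := by
    apply HasDerivAt.fun_sum
    intro j _
    have h0 := (hasDerivAt_pow (x + 1 + j) a).const_mul (((m + 1).choose j : ℝ) * (-1) ^ j)
    have e : x + 1 + j - 1 = x + j := by omega
    rw [e] at h0
    exact h0.mul_const _
  have h := (hasDerivAt_const a (-(((m + 1).factorial : ℝ) * (x.factorial : ℝ) / ((m + x + 2).factorial : ℝ)))).add hsum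
  have hval : (0 : ℝ) + (∑ j ∈ range (m + 2), ((m + 1).choose j : ℝ) * (-1) ^ j * (((x + 1 + j : ℕ) : ℝ) * a ^ (x + j)) *
      (1 / ((x : ℝ) + j + 1))) = a ^ x * (1 - a) ^ (m + 1) := by
    have step : ∀ j ∈ range (m + 2), ((m + 1).choose j : ℝ) * (-1) ^ j * (((x + 1 + j : ℕ) : ℝ) * a ^ (x + j)) *
        (1 / ((x : ℝ) + j + 1)) = (-a) ^ j * 1 ^ (m + 1 - j) * ((m + 1).choose j : ℝ) * a ^ x := by
      intro j _
      have h1 : ((x : ℝ) + j + 1) ≠ 0 := by positivity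
      rw [neg_pow a j, show x + j = j + x by ring, pow_add]
      push_cast
      field_simp
      ring
    rw [Finset.sum_congr rfl step, zero_add, ← Finset.sum_mul, ← add_pow]
    norm_num
    ring
  exact hval ▸ h

theorem Send (m x : ℕ) : Saux m x 1 = 0 := by
  unfold Saux; simp

theorem S1end (m x : ℕ) : Saux1 m x 1 = 0 := by
  unfold Saux1; simp

theorem G1end (m x : ℕ) : Gaux1 m x 1 = 0 := by
  unfold Gaux1
  have e1 : ∀ j ∈ range (m + 2), ((m + 1).choose j : ℝ) * (-1) ^ j * (1:ℝ) ^ (x + 1 + j) *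
      (1 / ((x : ℝ) + j + 1)) = ((m + 1).choose j : ℝ) * (-1) ^ j / ((x : ℝ) + j + 1) := by
    intro j _
    ring
  rw [Finset.sum_congr rfl e1]
  have t1 := Tsum (m + 1) x
  rw [show m + 1 + 1 = m + 2 by rfl, show m + 1 + x + 1 = m + x + 2 by omega] at t1
  rw [t1]
  ring

theorem Gend (m x : ℕ) : Gaux m x 1 = 0 := by
  unfold Gaux
  have e1 : ∀ j ∈ range (m + 2), ((m + 1).choose j : ℝ) * (-1) ^ j * (1:ℝ) ^ (x + 2 + j) *
      (1 / (((x : ℝ) + j + 1) * ((x : ℝ) + j + 2))) =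
      ((m + 1).choose j : ℝ) * (-1) ^ j / ((x : ℝ) + j + 1)
        - ((m + 1).choose j : ℝ) * (-1) ^ j / (((x + 1 : ℕ) : ℝ) + j + 1) := by
    intro j _
    have h1 : ((x : ℝ) + j + 1) ≠ 0 := by positivity
    have h2 : ((x : ℝ) + j + 2) ≠ 0 := by positivity
    push_cast
    field_simp
    ring
  rw [Finset.sum_congr rfl e1, Finset.sum_sub_distrib]
  have t1 := Tsum (m + 1) x
  rw [show m + 1 + 1 = m + 2 by rfl, show m + 1 + x + 1 = m + x + 2 by omega] at t1
  have t2 := Tsum (m + 1) (x + 1)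
  rw [show m + 1 + 1 = m + 2 by rfl, show m + 1 + (x + 1) + 1 = m + x + 3 by omega] at t2
  rw [t1, t2]
  ring

theorem SeqG (m x : ℕ) (a : ℝ) : Saux m x a = Gaux m x a := by
  have hD1 : ∀ y : ℝ, HasDerivAt (fun y => Saux1 m x y - Gaux1 m x y) 0 y := by
    intro y
    have h := (hS2 m x y).sub (hG2 m x y)
    rwa [sub_self] at h
  have hc : ∀ y : ℝ, Saux1 m x y - Gaux1 m x y = 0 := by
    intro y
    have h := is_const_of_deriv_eq_zero (f := fun y => Saux1 m x y - Gaux1 m x y)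
      (fun z => (hD1 z).differentiableAt) (fun z => (hD1 z).deriv) y 1
    rw [h, S1end, G1end, sub_zero]
  have hD : ∀ y : ℝ, HasDerivAt (fun y => Saux m x y - Gaux m x y) 0 y := by
    intro y
    have h := (hS1 m x y).sub (hG1 m x y)
    rwa [hc y] at h
  have h := is_const_of_deriv_eq_zero (f := fun y => Saux m x y - Gaux m x y)
    (fun z => (hD z).differentiableAt) (fun z => (hD z).deriv) a 1
  rw [Send, Gend, sub_zero] at h
  linarith [h]

/-- Expansion of `(1 − a) I_n(1 − a, n − x)` as a polynomial in `a`. -/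
theorem In_one_sub_expansion (n x : ℕ) (hx : x ≤ n) (a : ℝ) :
    (1 - a) * In n (n - x) (1 - a) =
      ((n - x + 1).factorial : ℝ) * ((x + 1).factorial : ℝ) / ((n + 3).factorial : ℝ)
      - (((n - x + 1).factorial : ℝ) * (x.factorial : ℝ) / ((n + 2).factorial : ℝ)) * a
      + ∑ k ∈ Finset.Icc (x + 2) (n + 3),
          ((n - x + 1).choose (k - x - 2) : ℝ) * (-1) ^ (k - x - 2) * a ^ k
            / (((k : ℝ) - 1) * (k : ℝ)) := by
  obtain ⟨m, rfl⟩ : ∃ m, n = x + m := ⟨n - x, by omega⟩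
  rw [show x + m - x = m by omega]
  have lhs_eq : (1 - a) * In (x + m) m (1 - a) = Saux m x a := by
    unfold In
    rw [show x + m - m = x by omega, intExpand m x (1 - a)]
    unfold Saux
    rw [Finset.mul_sum, Finset.mul_sum]
    apply Finset.sum_congr rfl
    intro j _
    push_cast
    ring
  have rhs_eq : Gaux m x a =
      ((m + 1).factorial : ℝ) * ((x + 1).factorial : ℝ) / ((x + m + 3).factorial : ℝ)
      - (((m + 1).factorial : ℝ) * (x.factorial : ℝ) / ((x + m + 2).factorial : ℝ)) * a
      + ∑ k ∈ Finset.Icc (x + 2) (x + m + 3),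
          ((m + 1).choose (k - x - 2) : ℝ) * (-1) ^ (k - x - 2) * a ^ k
            / (((k : ℝ) - 1) * (k : ℝ)) := by
    unfold Gaux
    rw [show Finset.Icc (x + 2) (x + m + 3) = Finset.Ico (x + 2) (x + m + 3 + 1) from
      (Finset.Ico_add_one_right_eq_Icc _ _).symm, Finset.sum_Ico_eq_sum_range,
      show x + m + 3 + 1 - (x + 2) = m + 2 by omega,
      show m + x + 3 = x + m + 3 by omega, show m + x + 2 = x + m + 2 by omega]
    congr 1
    apply Finset.sum_congr rfl
    intro i _
    rw [show x + 2 + i - x - 2 = i by omega]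
    have e : (((x + 2 + i : ℕ) : ℝ) - 1) * ((x + 2 + i : ℕ) : ℝ) =
        ((x : ℝ) + i + 1) * ((x : ℝ) + i + 2) := by push_cast; ring
    rw [e, mul_one_div]
  rw [lhs_eq, SeqG, rhs_eq]
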